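/- Let G be a finite abelian group and U a unitary operator on the Hilbert space with orthonormal basis {|g⟩ : g ∈ G}. Suppose that for every subgroup V ≤ G, every shift c ∈ G, and every x ∈ G, the measurement probability |⟨x|U|c+V⟩|² equals |⟨x|U|V⟩|², where |c+V⟩ denotes the normalized uniform superposition over the coset c+V. Then every matrix entry of U has modulus 1/√|G|, i.e. |⟨x|U|y⟩| = 1/√|G| for all x, y ∈ G. -/

import Mathlib

/-- Shift invariance of the output distribution (over all subgroups, shifts and
outcomes) forces every matrix entry of the unitary `U` to have modulus `1/√|G|`. -/
theorem shift_invariance_forces_flat_entries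
    {G : Type*} [AddCommGroup G] [Fintype G] [DecidableEq G]
    (U : Matrix G G ℂ) (hU : U ∈ Matrix.unitaryGroup G ℂ)
    (hinv : ∀ (V : AddSubgroup G) (c x : G),
      ‖(Real.sqrt (Nat.card V) : ℂ)⁻¹ *
        ∑ g : G, Set.indicator (V : Set G) (fun v => U x (c + v)) g‖ ^ 2
      =
      ‖(Real.sqrt (Nat.card V) : ℂ)⁻¹ *
        ∑ g : G, Set.indicator (V : Set G) (fun v => U x v) g‖ ^ 2) :
    ∀ x y : G, ‖U x y‖ = 1 / Real.sqrt (Fintype.card G) := by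
  intro x y
  -- From the trivial subgroup: |U x c| = |U x 0| for all c
  have key : ∀ c : G, ‖U x c‖ ^ 2 = ‖U x 0‖ ^ 2 := by
    intro c
    have h := hinv ⊥ c x
    have hcard : (Nat.card (⊥ : AddSubgroup G) : ℝ) = 1 := by simp
    have hsum : ∀ c' : G,
        (∑ g : G, Set.indicator ((⊥ : AddSubgroup G) : Set G) (fun v => U x (c' + v)) g)
        = U x c' := by
      intro c'
      rw [Finset.sum_eq_single 0]
      · simp
      · intro b _ hb
        simp [Set.indicator_of_notMem, hb]
      · simp
    have h0 : (∑ g : G, Set.indicator ((⊥ : AddSubgroup G) : Set G) (fun v => U x v) g)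
        = U x 0 := by
      have := hsum 0
      simpa using this
    rw [hsum c, h0, hcard] at h
    simpa using h
  -- Row norm is 1
  have hrow : ∑ c : G, ‖U x c‖ ^ 2 = 1 := by
    have h := hU.2
    have := congrFun (congrFun h x) x
    simp only [Matrix.mul_apply, Matrix.one_apply_eq, Matrix.star_apply] at this
    have heq : ∀ c : G, U x c * star (U x c) = ((‖U x c‖ ^ 2 : ℝ) : ℂ) := by
      intro c
      rw [show star (U x c) = (starRingEnd ℂ) (U x c) from rfl, Complex.mul_conj,
        Complex.normSq_eq_norm_sq]
    calc ∑ c : G, ‖U x c‖ ^ 2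
        = Complex.re (∑ c : G, U x c * star (U x c)) := by
          rw [Complex.re_sum]
          refine Finset.sum_congr rfl fun c _ => ?_
          rw [heq c]; norm_cast
      _ = 1 := by rw [this]; simp
  have hcardsum : (Fintype.card G : ℝ) * ‖U x 0‖ ^ 2 = 1 := by
    calc (Fintype.card G : ℝ) * ‖U x 0‖ ^ 2
        = ∑ _c : G, ‖U x 0‖ ^ 2 := by
          rw [Finset.sum_const]; simp [mul_comm]
      _ = ∑ c : G, ‖U x c‖ ^ 2 := by
          exact Finset.sum_congr rfl fun c _ => (key c).symm
      _ = 1 := hrow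
  have hcpos : (0 : ℝ) < Fintype.card G := by positivity
  have h0 : ‖U x 0‖ ^ 2 = 1 / Fintype.card G := by
    field_simp at hcardsum ⊢
    linarith
  have hy : ‖U x y‖ ^ 2 = 1 / Fintype.card G := (key y).trans h0
  have : ‖U x y‖ = Real.sqrt (1 / Fintype.card G) := by
    rw [← hy, Real.sqrt_sq (norm_nonneg _)]
  rw [this, Real.sqrt_div' 1 (by norm_num)]
  simp
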